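/- Let m ≥ 3 be odd and let f₁(x) = x + x^{2^{(m+1)/2} − 1} + x^{2^m − 2^{(m+1)/2} + 1}. For the binary sequence s_t = Tr(f₁(α^t + 1)), the minimal polynomial of the sequence is g_s(x) = (x − 1)·m_{α^{−1}}(x), which has degree m + 1; consequently the binary cyclic code C_s has length 2^m − 1 and 𝔽₂-dimension 2^m − 2 − m, and its minimum distance is exactly 4 (every nonzero codeword has Hamming weight at least 4, and some codeword has Hamming weight exactly 4). -/

import Mathlib

open Polynomial
open scoped Classical

/-- The polynomial S(x) = ∑_{t=0}^{v−1} s_t x^t ∈ 𝔽₂[x], where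
    s_t = Tr(f(α^t + 1)) and v = 2^m − 1. -/
noncomputable def traceSeqPoly (m : ℕ) (α : GaloisField 2 m)
    (f : GaloisField 2 m → GaloisField 2 m) : Polynomial (ZMod 2) :=
  ∑ t ∈ Finset.range (2 ^ m - 1),
    C (Algebra.trace (ZMod 2) (GaloisField 2 m) (f (α ^ t + 1))) * X ^ t

/-- The minimal polynomial of the sequence:
    g_s(x) = (x^v − 1)/gcd(x^v − 1, S(x)). Its degree is the linear span L_s. -/
noncomputable def genPoly (m : ℕ) (α : GaloisField 2 m)
    (f : GaloisField 2 m → GaloisField 2 m) : Polynomial (ZMod 2) :=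
  (X ^ (2 ^ m - 1) - 1) /
    EuclideanDomain.gcd (X ^ (2 ^ m - 1) - 1) (traceSeqPoly m α f)

/-- The binary cyclic code C_s = {c ∈ 𝔽₂[x] : deg c < v and g_s ∣ c},
    as an 𝔽₂-submodule of 𝔽₂[x]. -/
noncomputable def codeC (m : ℕ) (α : GaloisField 2 m)
    (f : GaloisField 2 m → GaloisField 2 m) :
    Submodule (ZMod 2) (Polynomial (ZMod 2)) :=
  Polynomial.degreeLT (ZMod 2) (2 ^ m - 1) ⊓
    (Ideal.span {genPoly m α f}).restrictScalars (ZMod 2)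

/-- The set of Hamming weights (numbers of nonzero coefficients) of the
    nonzero codewords of a code; the minimum distance is its least element. -/
def wtSet (Cs : Submodule (ZMod 2) (Polynomial (ZMod 2))) : Set ℕ :=
  {w | ∃ c : Polynomial (ZMod 2), c ∈ Cs ∧ c ≠ 0 ∧ c.support.card = w}



section Aux
variable {m : ℕ}
local notation "L" => GaloisField 2 m
local notation "F" => ZMod 2
local notation "v" => 2 ^ m - 1

lemma zmod2_sq (r : ZMod 2) : r ^ 2 = r := by revert r; decide
lemma zmod2_ne_zero {r : ZMod 2} (h : r ≠ 0) : r = 1 := by revert r; decide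

lemma vpos (hm : m ≠ 0) : 0 < 2 ^ m - 1 := by
  have := Nat.one_lt_two_pow (n := m) hm; omega

lemma v7 (hm3 : 3 ≤ m) : 7 ≤ 2 ^ m - 1 := by
  have : 2 ^ 3 ≤ 2 ^ m := Nat.pow_le_pow_right (by norm_num) hm3
  omega

lemma mle (hm3 : 3 ≤ m) : m + 3 ≤ 2 ^ m := by
  induction m, hm3 using Nat.le_induction with
  | base => norm_num
  | succ n hn ih => have : 2 ^ n ≥ n + 3 := ih; rw [pow_succ]; omega

lemma two_cast_zero : (2 : L) = 0 := by
  have : CharP L 2 := inferInstance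
  exact_mod_cast CharP.cast_eq_zero L 2

lemma vcast (hm : m ≠ 0) : ((2 ^ m - 1 : ℕ) : L) = 1 := by
  have h1 : (1 : ℕ) ≤ 2 ^ m := Nat.one_le_two_pow
  rw [Nat.cast_sub h1]
  have : ((2 : ℕ) : L) = 0 := by exact_mod_cast two_cast_zero
  rw [Nat.cast_pow, this, zero_pow hm, Nat.cast_one, zero_sub]
  exact neg_eq_of_add_eq_zero_left (by rw [← two_cast_zero]; norm_num)

lemma GF_card (hm : m ≠ 0) [Fintype L] : Fintype.card L = 2 ^ m := by
  rw [← Nat.card_eq_fintype_card]; exact GaloisField.card 2 m hm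

lemma pow_card_GF (hm : m ≠ 0) (x : L) : x ^ (2 ^ m) = x := by
  haveI : Fintype L := Fintype.ofFinite L
  have := FiniteField.pow_card x
  rwa [GF_card hm] at this

section alpha
variable (hm : m ≠ 0) {α : GaloisField 2 m} (hα : orderOf α = 2 ^ m - 1)
include hα

lemma alpha_pow_v : α ^ (2 ^ m - 1) = 1 := hα ▸ pow_orderOf_eq_one α

include hm in
lemma alpha_ne_zero : α ≠ 0 := by
  intro h
  have h1 : α ^ (2 ^ m - 1) = 1 := alpha_pow_v hα
  rw [h, zero_pow (by have := vpos hm; omega)] at h1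
  exact zero_ne_one h1

include hm in
lemma pow_inj {j k : ℕ} (hj : j < 2 ^ m - 1) (hk : k < 2 ^ m - 1) (h : α ^ j = α ^ k) :
    j = k := by
  have hα0 := alpha_ne_zero hm hα
  have key : ∀ j k : ℕ, j ≤ k → k < 2 ^ m - 1 → α ^ j = α ^ k → j = k := by
    intro j k hjk hk h
    have : α ^ j * α ^ (k - j) = α ^ j * 1 := by
      rw [← pow_add, mul_one, Nat.add_sub_cancel' hjk, h]
    have h2 : α ^ (k - j) = 1 := mul_left_cancel₀ (pow_ne_zero j hα0) this
    have h3 : (2 ^ m - 1) ∣ (k - j) := hα ▸ orderOf_dvd_of_pow_eq_one h2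
    rcases Nat.eq_zero_or_pos (k - j) with h0 | h0
    · omega
    · have := Nat.le_of_dvd h0 h3; omega
  rcases le_total j k with hjk | hjk
  · exact key j k hjk hk h
  · exact (key k j hjk hj h.symm).symm

include hm in
lemma exists_pow_eq (x : L) (hx : x ≠ 0) : ∃ k, k < 2 ^ m - 1 ∧ α ^ k = x := by
  haveI : Fintype L := Fintype.ofFinite L
  have hα0 := alpha_ne_zero hm hα
  set T : Finset L := Finset.univ \ {0} with hT
  have hTcard : T.card = 2 ^ m - 1 := by
    rw [hT, Finset.card_sdiff_of_subset (by simp), Finset.card_univ, GF_card hm, Finset.card_singleton]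
  set im : Finset L := (Finset.range (2 ^ m - 1)).image (fun k => α ^ k) with him
  have hsub : im ⊆ T := by
    intro y hy
    rw [him, Finset.mem_image] at hy
    obtain ⟨k, _, rfl⟩ := hy
    exact Finset.mem_sdiff.mpr ⟨Finset.mem_univ _, by simpa using pow_ne_zero k hα0⟩
  have hcard : im.card = 2 ^ m - 1 := by
    rw [him, Finset.card_image_of_injOn, Finset.card_range]
    intro a ha b hb hab
    exact pow_inj hm hα (Finset.mem_range.mp ha) (Finset.mem_range.mp hb) hab
  have : T = im := (Finset.eq_of_subset_of_card_le hsub (by omega)).symm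
  have hxT : x ∈ T := Finset.mem_sdiff.mpr ⟨Finset.mem_univ _, by simpa using hx⟩
  rw [this, him, Finset.mem_image] at hxT
  obtain ⟨k, hk, hkx⟩ := hxT
  exact ⟨k, Finset.mem_range.mp hk, hkx⟩

end alpha
end Aux

section Trace
variable {m : ℕ}
local notation "L" => GaloisField 2 m
local notation "F" => ZMod 2

noncomputable def frobAlg (m : ℕ) : GaloisField 2 m ≃ₐ[ZMod 2] GaloisField 2 m :=
  AlgEquiv.ofRingEquiv (f := frobeniusEquiv (GaloisField 2 m) 2)
    (fun r => by
      show frobenius _ 2 (algebraMap (ZMod 2) _ r) = _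
      rw [frobenius_def, ← map_pow, zmod2_sq])

lemma frobAlg_apply (x : GaloisField 2 m) : frobAlg m x = x ^ 2 := rfl

lemma frobAlg_pow_apply (k : ℕ) (x : GaloisField 2 m) :
    (frobAlg m ^ k) x = x ^ 2 ^ k := by
  induction k generalizing x with
  | zero => simp
  | succ n ih =>
    rw [pow_succ, AlgEquiv.mul_apply, frobAlg_apply, ih (x ^ 2), ← pow_mul]
    congr 1
    rw [pow_succ]
    ring

variable (hm3 : 3 ≤ m) {α : GaloisField 2 m} (hα : orderOf α = 2 ^ m - 1)
include hm3 hα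

lemma trace_formula (w : GaloisField 2 m) :
    algebraMap F L (Algebra.trace F L w) = ∑ k ∈ Finset.range m, w ^ 2 ^ k := by
  have hm : m ≠ 0 := by omega
  rw [trace_eq_sum_automorphisms]
  set e : Fin m → (L ≃ₐ[F] L) := fun k => frobAlg m ^ (k : ℕ) with he
  have hinj : Function.Injective e := by
    intro j k h
    have : α ^ 2 ^ (j : ℕ) = α ^ 2 ^ (k : ℕ) := by
      rw [← frobAlg_pow_apply, ← frobAlg_pow_apply, he] at *
      simp only [he] at h
      rw [h]
    have hb : ∀ i : Fin m, 2 ^ (i : ℕ) < 2 ^ m - 1 := by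
      intro i
      have h1 : 2 ^ (i : ℕ) ≤ 2 ^ (m - 1) := Nat.pow_le_pow_right (by norm_num) (by omega)
      have h2 : 2 ^ (m - 1) * 2 = 2 ^ m := by
        rw [← pow_succ]; congr 1; omega
      have h3 : 2 ^ (m-1) ≥ 4 := by
        calc 2^(m-1) ≥ 2^2 := Nat.pow_le_pow_right (by norm_num) (by omega)
        _ ≥ 4 := by norm_num
      omega
    have := pow_inj hm hα (hb j) (hb k) this
    exact Fin.ext (Nat.pow_right_injective (le_refl 2) this)
  have hcard : Fintype.card (L ≃ₐ[F] L) = m := by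
    rw [← Nat.card_eq_fintype_card, IsGalois.card_aut_eq_finrank, GaloisField.finrank 2 hm]
  have hbij : Function.Bijective e :=
    (Fintype.bijective_iff_injective_and_card e).mpr ⟨hinj, by simp [hcard]⟩
  calc (∑ σ : L ≃ₐ[F] L, σ w)
      = ∑ k : Fin m, (frobAlg m ^ (k : ℕ)) w :=
        (Fintype.sum_bijective e hbij (fun k => (frobAlg m ^ (k : ℕ)) w)
          (fun σ => σ w) (fun k => rfl)).symm
    _ = ∑ k ∈ Finset.range m, (frobAlg m ^ k) w := Fin.sum_univ_eq_sum_range (fun k => (frobAlg m ^ k) w) m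
    _ = _ := Finset.sum_congr rfl fun k _ => frobAlg_pow_apply k w

lemma trace_sq (w : GaloisField 2 m) :
    Algebra.trace F L (w ^ 2) = Algebra.trace F L w := by
  have hm : m ≠ 0 := by omega
  apply (algebraMap F L).injective
  rw [trace_formula hm3 hα, trace_formula hm3 hα]
  have h1 : ∀ k, (w ^ 2) ^ 2 ^ k = w ^ 2 ^ (k + 1) := by
    intro k; rw [← pow_mul, pow_succ, mul_comm]
  simp_rw [h1]
  have h2 := Finset.sum_range_succ (fun k => w ^ 2 ^ k) m
  have h3 := Finset.sum_range_succ' (fun k => w ^ 2 ^ k) m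
  rw [h2] at h3
  simp only [pow_zero, pow_one, pow_card_GF hm] at h3
  exact add_right_cancel h3.symm

lemma trace_two_pow (h : ℕ) (w : GaloisField 2 m) :
    Algebra.trace F L (w ^ 2 ^ h) = Algebra.trace F L w := by
  induction h with
  | zero => simp
  | succ n ih =>
    have : w ^ 2 ^ (n + 1) = (w ^ 2 ^ n) ^ 2 := by rw [← pow_mul, pow_succ]
    rw [this, trace_sq hm3 hα, ih]

omit hα in
include hm3 in
lemma trace_one_GF (hmo : Odd m) : Algebra.trace F L (1 : L) = 1 := by
  have hm : m ≠ 0 := by omega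
  rw [← (map_one (algebraMap F L)), Algebra.trace_algebraMap, GaloisField.finrank 2 hm]
  obtain ⟨c, hc⟩ := hmo
  subst hc
  rw [nsmul_eq_mul, mul_one]
  push_cast
  rw [(by decide : (2 : ZMod 2) = 0)]
  ring

lemma trace_f (hmo : Odd m) (y : GaloisField 2 m) :
    Algebra.trace F L (y + y ^ (2 ^ ((m + 1) / 2) - 1) + y ^ (2 ^ m - 2 ^ ((m + 1) / 2) + 1))
      = Algebra.trace F L y := by
  have hm : m ≠ 0 := by omega
  obtain ⟨c, hc⟩ := hmo
  set h' := (m + 1) / 2 with hh'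
  have hq4 : 4 ≤ 2 ^ h' := by
    calc (4 : ℕ) = 2 ^ 2 := rfl
    _ ≤ 2 ^ h' := Nat.pow_le_pow_right (by norm_num) (by omega)
  have hqq : 2 ^ h' * 2 ^ h' = 2 * 2 ^ m := by
    rw [← pow_add, (by omega : h' + h' = m + 1), pow_succ, mul_comm]
  have hexp : (2 ^ m - 2 ^ h' + 1) * 2 ^ h' = 2 ^ m * (2 ^ h' - 2) + 2 ^ h' := by
    calc (2 ^ m - 2 ^ h' + 1) * 2 ^ h'
        = (2 ^ m - 2 ^ h') * 2 ^ h' + 2 ^ h' := by rw [add_mul, one_mul]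
      _ = 2 ^ m * 2 ^ h' - 2 ^ h' * 2 ^ h' + 2 ^ h' := by rw [Nat.sub_mul]
      _ = 2 ^ m * 2 ^ h' - 2 * 2 ^ m + 2 ^ h' := by rw [hqq]
      _ = 2 ^ m * (2 ^ h' - 2) + 2 ^ h' := by
          rw [Nat.mul_sub]; ring_nf
  have hkey : y ^ ((2 ^ m - 2 ^ h' + 1) * 2 ^ h') = (y ^ (2 ^ h' - 1)) ^ 2 := by
    rw [hexp, pow_add, pow_mul, pow_card_GF hm, ← pow_add, ← pow_mul]
    congr 1
    omega
  have htr : Algebra.trace F L (y ^ (2 ^ m - 2 ^ h' + 1))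
      = Algebra.trace F L (y ^ (2 ^ h' - 1)) := by
    rw [← trace_two_pow hm3 hα h' (y ^ (2 ^ m - 2 ^ h' + 1)), ← pow_mul, hkey,
      trace_sq hm3 hα]
  rw [map_add, map_add, htr, add_assoc]
  have hz : ∀ a : ZMod 2, a + a = 0 := by decide
  rw [hz, add_zero]

omit hm3 hα in
lemma geom_sum_GF (hm : m ≠ 0) (γ : GaloisField 2 m) (hγ : γ ^ (2 ^ m - 1) = 1) :
    ∑ t ∈ Finset.range (2 ^ m - 1), γ ^ t = if γ = 1 then 1 else 0 := by
  split_ifs with h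
  · subst h
    simp only [one_pow, Finset.sum_const, Finset.card_range, nsmul_eq_mul, mul_one]
    exact vcast hm
  · have hg := geom_sum_mul γ (2 ^ m - 1)
    rw [hγ, sub_self] at hg
    rcases mul_eq_zero.mp hg with h1 | h2
    · exact h1
    · exact absurd (sub_eq_zero.mp h2) h

lemma aeval_S (hmo : Odd m) (f : GaloisField 2 m → GaloisField 2 m)
    (hf : ∀ x, f x = x + x ^ (2 ^ ((m + 1) / 2) - 1) + x ^ (2 ^ m - 2 ^ ((m + 1) / 2) + 1))
    (β : GaloisField 2 m) (hβ : β ^ (2 ^ m - 1) = 1) :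
    aeval β (traceSeqPoly m α f) =
      (∑ k ∈ Finset.range m, if α ^ 2 ^ k * β = 1 then (1 : GaloisField 2 m) else 0) +
        (if β = 1 then 1 else 0) := by
  have hm : m ≠ 0 := by omega
  unfold traceSeqPoly
  rw [map_sum]
  have h1 : ∀ t ∈ Finset.range (2 ^ m - 1),
      aeval β (C (Algebra.trace F L (f (α ^ t + 1))) * X ^ t)
        = (∑ k ∈ Finset.range m, (α ^ 2 ^ k * β) ^ t) + β ^ t := by
    intro t _
    rw [map_mul, aeval_C, map_pow, aeval_X]
    have h2 : Algebra.trace F L (f (α ^ t + 1)) = Algebra.trace F L (α ^ t) + 1 := by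
      rw [hf, trace_f hm3 hα hmo, map_add, trace_one_GF hm3 hmo]
    rw [h2, map_add, map_one, trace_formula hm3 hα, add_mul, one_mul, Finset.sum_mul]
    congr 1
    refine Finset.sum_congr rfl fun k _ => ?_
    rw [mul_pow, ← pow_mul, ← pow_mul, mul_comm t (2 ^ k)]
  rw [Finset.sum_congr rfl h1, Finset.sum_add_distrib, Finset.sum_comm]
  congr 1
  · refine Finset.sum_congr rfl fun k _ => geom_sum_GF hm _ ?_
    rw [mul_pow, ← pow_mul, mul_comm (2 ^ k) _, pow_mul, alpha_pow_v hα, one_pow, one_mul, hβ]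
  · exact geom_sum_GF hm β hβ

omit hm3 hα in
lemma v_odd (hm : m ≠ 0) : ¬ (2 ∣ (2 ^ m - 1)) := by
  have h1 : 2 ^ m = 2 * 2 ^ (m - 1) := by
    rw [← pow_succ']
    congr 1
    omega
  have h2 : 1 ≤ 2 ^ (m - 1) := Nat.one_le_two_pow
  omega

lemma not_alpha_two_pow_eq_one (k : ℕ) : α ^ 2 ^ k ≠ 1 := by
  intro h
  have hdvd : (2 ^ m - 1) ∣ 2 ^ k := hα ▸ orderOf_dvd_of_pow_eq_one h
  have hco : Nat.Coprime (2 ^ m - 1) 2 :=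
    Nat.coprime_comm.mp ((Nat.prime_two.coprime_iff_not_dvd).mpr (v_odd (show m ≠ 0 by omega)))
  have := (hco.pow_right k).eq_one_of_dvd hdvd
  have := v7 hm3
  omega

lemma aeval_S_one (hmo : Odd m) (f : GaloisField 2 m → GaloisField 2 m)
    (hf : ∀ x, f x = x + x ^ (2 ^ ((m + 1) / 2) - 1) + x ^ (2 ^ m - 2 ^ ((m + 1) / 2) + 1)) :
    aeval (1 : GaloisField 2 m) (traceSeqPoly m α f) = 1 := by
  rw [aeval_S hm3 hα hmo f hf 1 (one_pow _)]
  rw [if_pos rfl]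
  have : ∀ k ∈ Finset.range m, (if α ^ 2 ^ k * 1 = 1 then (1 : GaloisField 2 m) else 0) = 0 := by
    intro k _
    rw [if_neg]
    rw [mul_one]
    exact not_alpha_two_pow_eq_one hm3 hα k
  rw [Finset.sum_congr rfl this, Finset.sum_const_zero, zero_add]

omit hm3 in
lemma alpha_inv_pow_v : (α⁻¹) ^ (2 ^ m - 1) = 1 := by
  rw [inv_pow, alpha_pow_v hα, inv_one]

lemma alpha_inv_ne_one : (α⁻¹ : GaloisField 2 m) ≠ 1 := by
  rw [Ne, inv_eq_one]
  intro h
  rw [h, orderOf_one] at hα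
  have := v7 hm3
  omega

omit hα in
lemma two_pow_lt_v (k : ℕ) (hk : k < m) : 2 ^ k < 2 ^ m - 1 := by
  have h1 : 2 ^ k ≤ 2 ^ (m - 1) := Nat.pow_le_pow_right (by norm_num) (by omega)
  have h2 : 2 ^ (m - 1) * 2 = 2 ^ m := by rw [← pow_succ]; congr 1; omega
  have h3 : 4 ≤ 2 ^ (m - 1) := by
    calc (4:ℕ) = 2 ^ 2 := rfl
    _ ≤ 2 ^ (m - 1) := Nat.pow_le_pow_right (by norm_num) (by omega)
  omega

lemma aeval_S_inv (hmo : Odd m) (f : GaloisField 2 m → GaloisField 2 m)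
    (hf : ∀ x, f x = x + x ^ (2 ^ ((m + 1) / 2) - 1) + x ^ (2 ^ m - 2 ^ ((m + 1) / 2) + 1)) :
    aeval (α⁻¹ : GaloisField 2 m) (traceSeqPoly m α f) = 1 := by
  have hα0 := alpha_ne_zero (show m ≠ 0 by omega) hα
  rw [aeval_S hm3 hα hmo f hf α⁻¹ (alpha_inv_pow_v hα)]
  rw [if_neg (alpha_inv_ne_one hm3 hα)]
  have hcond : ∀ k ∈ Finset.range m,
      (if α ^ 2 ^ k * α⁻¹ = 1 then (1 : GaloisField 2 m) else 0)
        = (if k = 0 then (1 : GaloisField 2 m) else 0) := by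
    intro k hk
    rw [Finset.mem_range] at hk
    congr 1
    apply propext
    constructor
    · intro h
      have : α ^ 2 ^ k = α ^ 1 := by
        have := mul_right_cancel₀ (inv_ne_zero hα0) (h.trans (mul_inv_cancel₀ hα0).symm)
        rwa [pow_one]
      have h2 := pow_inj (show m ≠ 0 by omega) hα (two_pow_lt_v hm3 k hk)
        (by have := v7 hm3; omega) this
      have : k = 0 := by
        by_contra hk0
        have : 2 ≤ 2 ^ k := by
          calc (2:ℕ) = 2 ^ 1 := rfl
          _ ≤ 2 ^ k := Nat.pow_le_pow_right (by norm_num) (by omega)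
        omega
      exact this
    · rintro rfl
      rw [pow_zero, pow_one, mul_inv_cancel₀ hα0]
  rw [Finset.sum_congr rfl hcond, Finset.sum_ite_eq' (Finset.range m) 0 (fun _ => (1:GaloisField 2 m)),
    if_pos (Finset.mem_range.mpr (by omega)), add_zero]

lemma aeval_S_other (hmo : Odd m) (f : GaloisField 2 m → GaloisField 2 m)
    (hf : ∀ x, f x = x + x ^ (2 ^ ((m + 1) / 2) - 1) + x ^ (2 ^ m - 2 ^ ((m + 1) / 2) + 1))
    (β : GaloisField 2 m) (hβ : β ^ (2 ^ m - 1) = 1) (hβ1 : β ≠ 1)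
    (hβk : ∀ k < m, α ^ 2 ^ k * β ≠ 1) :
    aeval β (traceSeqPoly m α f) = 0 := by
  rw [aeval_S hm3 hα hmo f hf β hβ, if_neg hβ1]
  have : ∀ k ∈ Finset.range m, (if α ^ 2 ^ k * β = 1 then (1 : GaloisField 2 m) else 0) = 0 := by
    intro k hk
    rw [if_neg (hβk k (Finset.mem_range.mp hk))]
  rw [Finset.sum_congr rfl this, Finset.sum_const_zero, zero_add]

end Trace

section Poly
variable {m : ℕ} (hm3 : 3 ≤ m) {α : GaloisField 2 m} (hα : orderOf α = 2 ^ m - 1)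
local notation "L" => GaloisField 2 m
local notation "F" => ZMod 2

lemma poly_dvd_antisymm {p q : Polynomial (ZMod 2)} (h1 : p ∣ q) (h2 : q ∣ p) : p = q := by
  rcases associated_of_dvd_dvd h1 h2 with ⟨u, hu⟩
  obtain ⟨r, hr, hru⟩ := Polynomial.isUnit_iff.mp u.isUnit
  have hr1 : r = 1 := zmod2_ne_zero hr.ne_zero
  rw [← hu, ← hru, hr1, C_1, mul_one]

lemma aeval_sq (p : Polynomial (ZMod 2)) (x : GaloisField 2 m) :
    aeval (x ^ 2) p = (aeval x p) ^ 2 := by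
  have hcomp : (frobenius (GaloisField 2 m) 2).comp (algebraMap F L) = algebraMap F L := by
    refine RingHom.ext fun r => ?_
    show frobenius (GaloisField 2 m) 2 (algebraMap F L r) = _
    rw [frobenius_def, ← map_pow, zmod2_sq]
  have hx : x ^ 2 = frobenius (GaloisField 2 m) 2 x := rfl
  rw [aeval_def, hx, ← hcomp, ← Polynomial.hom_eval₂, frobenius_def, aeval_def]

lemma aeval_two_pow (p : Polynomial (ZMod 2)) (x : GaloisField 2 m) (k : ℕ) :
    aeval (x ^ 2 ^ k) p = (aeval x p) ^ 2 ^ k := by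
  induction k with
  | zero => simp
  | succ n ih =>
    have h1 : x ^ 2 ^ (n + 1) = (x ^ 2 ^ n) ^ 2 := by rw [← pow_mul, pow_succ]
    rw [h1, aeval_sq, ih, ← pow_mul, ← pow_succ]

lemma isIntegral_inv : IsIntegral F (α⁻¹ : GaloisField 2 m) := IsIntegral.of_finite F _

include hm3 hα

lemma adjoin_inv_top : IntermediateField.adjoin F {(α⁻¹ : GaloisField 2 m)} = ⊤ := by
  have hm : m ≠ 0 := by omega
  have hα0 : α ≠ 0 := alpha_ne_zero hm hα
  have hαinv : orderOf (α⁻¹ : GaloisField 2 m) = 2 ^ m - 1 := by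
    have hu : ((Units.mk0 α hα0)⁻¹ : (GaloisField 2 m)ˣ) = (α⁻¹ : GaloisField 2 m) :=
      Units.val_inv_eq_inv_val _
    rw [← hu, orderOf_units, orderOf_inv, ← orderOf_units, Units.val_mk0]
    exact hα
  rw [eq_top_iff]
  intro x _
  rcases eq_or_ne x 0 with rfl | hx
  · exact zero_mem _
  · obtain ⟨k, _, rfl⟩ := exists_pow_eq hm hαinv x hx
    exact pow_mem (IntermediateField.mem_adjoin_simple_self F _) k

lemma minpoly_inv_natDegree : (minpoly F (α⁻¹ : GaloisField 2 m)).natDegree = m := by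
  have h := IntermediateField.adjoin.finrank (isIntegral_inv (α := α))
  rw [adjoin_inv_top hm3 hα, IntermediateField.finrank_top',
    GaloisField.finrank 2 (show m ≠ 0 by omega)] at h
  exact h.symm

omit hm3 in
lemma minpoly_inv_dvd : minpoly F (α⁻¹ : GaloisField 2 m) ∣ (X ^ (2 ^ m - 1) - 1 : F[X]) := by
  refine minpoly.dvd F _ ?_
  rw [map_sub, map_pow, aeval_X, map_one, alpha_inv_pow_v hα, sub_self]

lemma coprime_X_sub_one_minpoly :
    IsCoprime (X - 1 : F[X]) (minpoly F (α⁻¹ : GaloisField 2 m)) := by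
  have hirr : Irreducible (X - 1 : F[X]) := by
    rw [(by rw [C_1] : (X - 1 : F[X]) = X - C 1)]
    exact irreducible_X_sub_C 1
  refine hirr.coprime_iff_not_dvd.mpr fun hdvd => ?_
  obtain ⟨b, hb⟩ := hdvd
  have hbu : IsUnit b := by
    rcases (minpoly.irreducible (isIntegral_inv (α := α))).isUnit_or_isUnit hb with h | h
    · exact absurd h (by rw [(by rw [C_1] : (X - 1 : F[X]) = X - C 1)]; exact not_isUnit_X_sub_C 1)
    · exact h
  have hX1ne : (X - 1 : F[X]) ≠ 0 := by
    rw [(by rw [C_1] : (X - 1 : F[X]) = X - C 1)]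
    exact X_sub_C_ne_zero 1
  have hdeg : (minpoly F (α⁻¹ : GaloisField 2 m)).natDegree = 1 := by
    rw [hb, natDegree_mul hX1ne hbu.ne_zero, natDegree_eq_zero_of_isUnit hbu,
      (by rw [C_1] : (X - 1 : F[X]) = X - C 1), natDegree_X_sub_C]
  rw [minpoly_inv_natDegree hm3 hα] at hdeg
  omega

lemma gfactor_dvd :
    (X - 1) * minpoly F (α⁻¹ : GaloisField 2 m) ∣ (X ^ (2 ^ m - 1) - 1 : F[X]) := by
  refine (coprime_X_sub_one_minpoly hm3 hα).mul_dvd ?_ (minpoly_inv_dvd hα)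
  rw [(by rw [C_1] : (X - 1 : F[X]) = X - C 1), dvd_iff_isRoot]
  simp [IsRoot, eval_pow]

omit hm3 hα in
lemma gfactor_monic : ((X - 1) * minpoly F (α⁻¹ : GaloisField 2 m)).Monic := by
  refine Monic.mul ?_ (minpoly.monic (isIntegral_inv (α := α)))
  rw [(by rw [C_1] : (X - 1 : F[X]) = X - C 1)]
  exact monic_X_sub_C 1

lemma gfactor_natDegree :
    ((X - 1) * minpoly F (α⁻¹ : GaloisField 2 m)).natDegree = m + 1 := by
  have hX1ne : (X - 1 : F[X]) ≠ 0 := by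
    rw [(by rw [C_1] : (X - 1 : F[X]) = X - C 1)]
    exact X_sub_C_ne_zero 1
  have hmne : minpoly F (α⁻¹ : GaloisField 2 m) ≠ 0 :=
    (minpoly.monic (isIntegral_inv (α := α))).ne_zero
  rw [natDegree_mul hX1ne hmne, (by rw [C_1] : (X - 1 : F[X]) = X - C 1), natDegree_X_sub_C,
    minpoly_inv_natDegree hm3 hα]
  omega

end Poly

section Main
variable {m : ℕ} (hm3 : 3 ≤ m) (hmo : Odd m) {α : GaloisField 2 m}
  (hα : orderOf α = 2 ^ m - 1) (f : GaloisField 2 m → GaloisField 2 m)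
  (hf : ∀ x, f x = x + x ^ (2 ^ ((m + 1) / 2) - 1) + x ^ (2 ^ m - 2 ^ ((m + 1) / 2) + 1))
local notation "L" => GaloisField 2 m
local notation "F" => ZMod 2
include hm3 hmo hα hf

lemma S_ne_zero : traceSeqPoly m α f ≠ 0 := by
  intro h
  have h1 := aeval_S_one hm3 hα hmo f hf
  rw [h, map_zero] at h1
  exact zero_ne_one h1

lemma coprime_g_S :
    IsCoprime ((X - 1) * minpoly F (α⁻¹ : GaloisField 2 m)) (traceSeqPoly m α f) := by
  have h1 : IsCoprime (X - 1 : F[X]) (traceSeqPoly m α f) := by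
    have hirr : Irreducible (X - 1 : F[X]) := by
      rw [(by rw [C_1] : (X - 1 : F[X]) = X - C 1)]; exact irreducible_X_sub_C 1
    refine hirr.coprime_iff_not_dvd.mpr fun hdvd => ?_
    obtain ⟨b, hb⟩ := hdvd
    have h2 := aeval_S_one hm3 hα hmo f hf
    rw [hb, map_mul, map_sub, aeval_X, map_one, sub_self, zero_mul] at h2
    exact zero_ne_one h2
  have h2 : IsCoprime (minpoly F (α⁻¹ : GaloisField 2 m)) (traceSeqPoly m α f) := by
    refine (minpoly.irreducible (isIntegral_inv (α := α))).coprime_iff_not_dvd.mpr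
      fun hdvd => ?_
    obtain ⟨b, hb⟩ := hdvd
    have h3 := aeval_S_inv hm3 hα hmo f hf
    rw [hb, map_mul, minpoly.aeval, zero_mul] at h3
    exact zero_ne_one h3
  exact h1.mul_left h2

lemma cofactor_dvd_S (Cp : Polynomial (ZMod 2))
    (hCp : (X ^ (2 ^ m - 1) - 1 : F[X]) = (X - 1) * minpoly F (α⁻¹ : GaloisField 2 m) * Cp) :
    Cp ∣ traceSeqPoly m α f := by
  classical
  have hm : m ≠ 0 := by omega
  have hPmonic : ((X ^ (2 ^ m - 1) - 1 : F[X])).Monic := by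
    rw [(by rw [C_1] : ((X : F[X]) ^ (2 ^ m - 1) - 1) = X ^ (2 ^ m - 1) - C 1)]
    exact monic_X_pow_sub_C 1 (by have := vpos hm; omega)
  have hgmonic := gfactor_monic (m := m) (α := α)
  have hCpmonic : Cp.Monic := hgmonic.of_mul_monic_left (hCp ▸ hPmonic)
  set φ := algebraMap (ZMod 2) (GaloisField 2 m) with hφ
  set Pl := (X ^ (2 ^ m - 1) - 1 : F[X]).map φ with hPl
  have hPl_eq : Pl = (X ^ (2 ^ m - 1) - 1 : (GaloisField 2 m)[X]) := by
    rw [hPl, Polynomial.map_sub, Polynomial.map_pow, map_X, Polynomial.map_one]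
  have hPlne : Pl ≠ 0 := Polynomial.map_ne_zero hPmonic.ne_zero
  have hPlsep : Pl.Separable := by
    rw [hPl_eq,
      (by rw [C_1] : ((X : (GaloisField 2 m)[X]) ^ (2 ^ m - 1) - 1) = X ^ (2 ^ m - 1) - C 1)]
    exact separable_X_pow_sub_C 1 (by rw [vcast hm]; exact one_ne_zero) one_ne_zero
  have hPldeg : Pl.natDegree = 2 ^ m - 1 := by
    rw [hPl_eq,
      (by rw [C_1] : ((X : (GaloisField 2 m)[X]) ^ (2 ^ m - 1) - 1) = X ^ (2 ^ m - 1) - C 1),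
      natDegree_X_pow_sub_C]
  have hroots_ge : 2 ^ m - 1 ≤ Multiset.card Pl.roots := by
    set s : Finset (GaloisField 2 m) := (Finset.range (2 ^ m - 1)).image (fun k => α ^ k)
      with hs
    have hcards : s.card = 2 ^ m - 1 := by
      rw [hs, Finset.card_image_of_injOn (fun a ha b hb hab =>
        pow_inj hm hα (Finset.mem_range.mp ha) (Finset.mem_range.mp hb) hab),
        Finset.card_range]
    have hle : s.val ≤ Pl.roots := by
      rw [Multiset.le_iff_count]
      intro a
      by_cases ha : a ∈ s
      · rw [Multiset.count_eq_one_of_mem s.nodup ha, Polynomial.count_roots]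
        refine (rootMultiplicity_pos hPlne).mpr ?_
        obtain ⟨k, _, rfl⟩ := Finset.mem_image.mp ha
        rw [IsRoot, hPl_eq]
        simp only [eval_sub, eval_pow, eval_X, eval_one]
        rw [← pow_mul, mul_comm k, pow_mul, alpha_pow_v hα, one_pow, sub_self]
      · rw [Multiset.count_eq_zero_of_notMem (by simpa using ha)]
        exact Nat.zero_le _
    calc 2 ^ m - 1 = Multiset.card s.val := by rw [← hcards]; rfl
    _ ≤ _ := Multiset.card_le_card hle
  have hcardroots : Multiset.card Pl.roots = Pl.natDegree :=
    le_antisymm Pl.card_roots' (by rw [hPldeg]; exact hroots_ge)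
  have hPlsplits : Splits Pl :=
    splits_iff_card_roots.mpr hcardroots
  set gl := ((X - 1) * minpoly F (α⁻¹ : GaloisField 2 m)).map φ with hgl
  set Cpl := Cp.map φ with hCpl
  have hPlfact : Pl = gl * Cpl := by rw [hPl, hCp, Polynomial.map_mul]
  have hsq : Squarefree Pl := hPlsep.squarefree
  have hCpl_dvd_Pl : Cpl ∣ Pl := ⟨gl, by rw [hPlfact, mul_comm]⟩
  have hCplsep : Cpl.Separable := hPlsep.of_dvd hCpl_dvd_Pl
  have hCplsplits : Splits Cpl :=
    hPlsplits.of_dvd hPlne hCpl_dvd_Pl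
  have hCplmonic : Cpl.Monic := hCpmonic.map φ
  have hSl_ne : (traceSeqPoly m α f).map φ ≠ 0 :=
    Polynomial.map_ne_zero (S_ne_zero hm3 hmo hα f hf)
  have hroot : ∀ β ∈ Cpl.roots, IsRoot ((traceSeqPoly m α f).map φ) β := by
    intro β hβ
    have hβroot : IsRoot Cpl β := (mem_roots'.mp hβ).2
    have hβPl : IsRoot Pl β := by
      rw [hPlfact, IsRoot, eval_mul, hβroot.eq_zero, mul_zero]
    have hβv : β ^ (2 ^ m - 1) = 1 := by
      rw [IsRoot, hPl_eq] at hβPl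
      simp only [eval_sub, eval_pow, eval_X, eval_one] at hβPl
      exact sub_eq_zero.mp hβPl
    have hnotg : ¬ IsRoot gl β := by
      intro hgroot
      have h1 : (X - C β) ∣ gl := dvd_iff_isRoot.mpr hgroot
      have h2 : (X - C β) ∣ Cpl := dvd_iff_isRoot.mpr hβroot
      exact not_isUnit_X_sub_C β (hsq _ (by rw [hPlfact]; exact mul_dvd_mul h1 h2))
    have hβ1 : β ≠ 1 := by
      rintro rfl
      apply hnotg
      rw [hgl, Polynomial.map_mul, IsRoot, eval_mul, Polynomial.map_sub, map_X,
        Polynomial.map_one, eval_sub, eval_X, eval_one, sub_self, zero_mul]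
    have hβk : ∀ k < m, α ^ 2 ^ k * β ≠ 1 := by
      intro k _ hcontra
      apply hnotg
      have hβeq : β = (α⁻¹) ^ 2 ^ k := by
        rw [(inv_eq_of_mul_eq_one_right hcontra).symm, inv_pow]
      have haev : aeval β (minpoly F (α⁻¹ : GaloisField 2 m)) = 0 := by
        rw [hβeq, aeval_two_pow, minpoly.aeval, zero_pow (Nat.two_pow_pos k).ne']
      have hrootmin : IsRoot ((minpoly F (α⁻¹ : GaloisField 2 m)).map φ) β := by
        rw [IsRoot, eval_map, ← aeval_def, haev]
      have hdvdgl : ((minpoly F (α⁻¹ : GaloisField 2 m)).map φ) ∣ gl := by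
        rw [hgl, Polynomial.map_mul]
        exact Dvd.intro_left _ rfl
      exact dvd_iff_isRoot.mp ((dvd_iff_isRoot.mpr hrootmin).trans hdvdgl)
    have h0 := aeval_S_other hm3 hα hmo f hf β hβv hβ1 hβk
    rw [IsRoot, eval_map, ← aeval_def, h0]
  have hCpl_eq := hCplsplits.eq_prod_roots_of_monic hCplmonic
  have hle2 : Cpl.roots ≤ ((traceSeqPoly m α f).map φ).roots := by
    rw [Multiset.le_iff_count]
    intro a
    by_cases ha : a ∈ Cpl.roots
    · rw [Multiset.count_eq_one_of_mem (Polynomial.nodup_roots hCplsep) ha,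
        Polynomial.count_roots]
      exact (rootMultiplicity_pos hSl_ne).mpr (hroot a ha)
    · rw [Multiset.count_eq_zero_of_notMem ha]
      exact Nat.zero_le _
  have hdvd2 : Cpl ∣ (traceSeqPoly m α f).map φ := by
    rw [hCpl_eq]
    exact dvd_trans (Multiset.prod_dvd_prod_of_le (Multiset.map_le_map hle2))
      (prod_multiset_X_sub_C_dvd _)
  exact (map_dvd_map' φ).mp hdvd2

lemma genPoly_eq :
    genPoly m α f = (X - 1) * minpoly F (α⁻¹ : GaloisField 2 m) := by
  have hm : m ≠ 0 := by omega
  obtain ⟨Cp, hCp⟩ := gfactor_dvd hm3 hα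
  have hCp_dvd_S : Cp ∣ traceSeqPoly m α f := cofactor_dvd_S hm3 hmo hα f hf Cp hCp
  have hCp_dvd_P : Cp ∣ (X ^ (2 ^ m - 1) - 1 : F[X]) :=
    Dvd.intro_left _ hCp.symm
  have h1 : Cp ∣ EuclideanDomain.gcd (X ^ (2 ^ m - 1) - 1 : F[X]) (traceSeqPoly m α f) :=
    EuclideanDomain.dvd_gcd hCp_dvd_P hCp_dvd_S
  have h2 := EuclideanDomain.gcd_dvd_left (X ^ (2 ^ m - 1) - 1 : F[X]) (traceSeqPoly m α f)
  have h3 := EuclideanDomain.gcd_dvd_right (X ^ (2 ^ m - 1) - 1 : F[X]) (traceSeqPoly m α f)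
  have hgS := coprime_g_S hm3 hmo hα f hf
  have hgD := hgS.of_isCoprime_of_dvd_right h3
  have h4 : EuclideanDomain.gcd (X ^ (2 ^ m - 1) - 1 : F[X]) (traceSeqPoly m α f) ∣ Cp :=
    (hgD.symm).dvd_of_dvd_mul_left (by rw [← hCp]; exact h2)
  have hDCp := poly_dvd_antisymm h4 h1
  have hPne : (X ^ (2 ^ m - 1) - 1 : F[X]) ≠ 0 := by
    have hPmonic : ((X ^ (2 ^ m - 1) - 1 : F[X])).Monic := by
      rw [(by rw [C_1] : ((X : F[X]) ^ (2 ^ m - 1) - 1) = X ^ (2 ^ m - 1) - C 1)]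
      exact monic_X_pow_sub_C 1 (by have := vpos hm; omega)
    exact hPmonic.ne_zero
  have hCpne : Cp ≠ 0 := by
    intro h
    rw [h, mul_zero] at hCp
    exact hPne hCp
  show (X ^ (2 ^ m - 1) - 1 : F[X]) /
      EuclideanDomain.gcd (X ^ (2 ^ m - 1) - 1 : F[X]) (traceSeqPoly m α f) = _
  rw [hDCp]
  exact (EuclideanDomain.eq_div_of_mul_eq_left hCpne hCp.symm).symm

end Main

section Helpers
variable {m : ℕ}

lemma support_sum_X_pow (s : Finset ℕ) :
    (∑ i ∈ s, (X : Polynomial (ZMod 2)) ^ i).support = s := by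
  classical
  ext j
  rw [Polynomial.mem_support_iff, Polynomial.finset_sum_coeff]
  simp_rw [Polynomial.coeff_X_pow]
  rw [Finset.sum_ite_eq s j (fun _ => (1 : ZMod 2))]
  by_cases h : j ∈ s <;> simp [h]

lemma aeval_sum_support (c : Polynomial (ZMod 2)) (β : GaloisField 2 m) :
    aeval β c = ∑ i ∈ c.support, β ^ i := by
  rw [aeval_def, Polynomial.eval₂_eq_sum, Polynomial.sum_def]
  refine Finset.sum_congr rfl fun i hi => ?_
  rw [zmod2_ne_zero (Polynomial.mem_support_iff.mp hi), map_one, one_mul]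

lemma orderOf_inv_GF (hm : m ≠ 0) {α : GaloisField 2 m} (hα : orderOf α = 2 ^ m - 1) :
    orderOf (α⁻¹ : GaloisField 2 m) = 2 ^ m - 1 := by
  have hα0 : α ≠ 0 := alpha_ne_zero hm hα
  have hu : (((Units.mk0 α hα0)⁻¹ : (GaloisField 2 m)ˣ) : GaloisField 2 m)
      = (α⁻¹ : GaloisField 2 m) := Units.val_inv_eq_inv_val _
  rw [← hu, orderOf_units, orderOf_inv, ← orderOf_units, Units.val_mk0]
  exact hα

end Helpers

section Dim
variable {m : ℕ} (hm3 : 3 ≤ m) (hmo : Odd m) {α : GaloisField 2 m}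
  (hα : orderOf α = 2 ^ m - 1) (f : GaloisField 2 m → GaloisField 2 m)
  (hf : ∀ x, f x = x + x ^ (2 ^ ((m + 1) / 2) - 1) + x ^ (2 ^ m - 2 ^ ((m + 1) / 2) + 1))
local notation "L" => GaloisField 2 m
local notation "F" => ZMod 2
include hm3 hmo hα hf

lemma mem_code_iff (c : F[X]) :
    c ∈ codeC m α f ↔ c.degree < ((2 ^ m - 1 : ℕ) : WithBot ℕ) ∧
      ((X - 1) * minpoly F (α⁻¹ : GaloisField 2 m)) ∣ c := by
  have hcode : codeC m α f =
      Polynomial.degreeLT F (2 ^ m - 1) ⊓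
        (Ideal.span {(X - 1) * minpoly F (α⁻¹ : GaloisField 2 m)}).restrictScalars F := by
    unfold codeC
    rw [genPoly_eq hm3 hmo hα f hf]
  rw [hcode, Submodule.mem_inf]
  constructor
  · rintro ⟨h1, h2⟩
    exact ⟨Polynomial.mem_degreeLT.mp h1, Ideal.mem_span_singleton.mp h2⟩
  · rintro ⟨h1, h2⟩
    exact ⟨Polynomial.mem_degreeLT.mpr h1, Ideal.mem_span_singleton.mpr h2⟩

lemma code_finrank : Module.finrank F ↥(codeC m α f) = 2 ^ m - 2 - m := by
  classical
  have hm : m ≠ 0 := by omega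
  have hgmonic := gfactor_monic (m := m) (α := α)
  have hgne : ((X - 1) * minpoly F (α⁻¹ : GaloisField 2 m)) ≠ 0 := hgmonic.ne_zero
  have hgdeg := gfactor_natDegree hm3 hα
  have hmle := mle hm3
  set n := 2 ^ m - 2 - m with hn
  have hvn : (m + 1) + n = 2 ^ m - 1 := by omega
  have hmem : ∀ d : F[X], d ∈ Polynomial.degreeLT F n →
      ((X - 1) * minpoly F (α⁻¹ : GaloisField 2 m)) * d ∈ codeC m α f := by
    intro d hd
    rw [mem_code_iff hm3 hmo hα f hf]
    refine ⟨?_, Dvd.intro _ rfl⟩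
    rcases eq_or_ne d 0 with rfl | hdne
    · rw [mul_zero, Polynomial.degree_zero]
      exact WithBot.bot_lt_coe _
    · rw [Polynomial.degree_mul, Polynomial.degree_eq_natDegree hgne,
        Polynomial.degree_eq_natDegree hdne, hgdeg]
      have hdn : d.natDegree < n := (Polynomial.natDegree_lt_iff_degree_lt hdne).mpr
        (Polynomial.mem_degreeLT.mp hd)
      exact_mod_cast (by omega : (m + 1) + d.natDegree < 2 ^ m - 1)
  let ψ : (Polynomial.degreeLT F n : Submodule F F[X]) →ₗ[F] ↥(codeC m α f) :=
    { toFun := fun d => ⟨((X - 1) * minpoly F (α⁻¹ : GaloisField 2 m)) * d.1,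
        hmem d.1 d.2⟩
      map_add' := fun d e => Subtype.ext (by simp [mul_add])
      map_smul' := fun r d => Subtype.ext (by simp [mul_smul_comm]) }
  have hinj : Function.Injective ψ := by
    intro d e h
    have h2 := congrArg Subtype.val h
    exact Subtype.ext (mul_left_cancel₀ hgne h2)
  have hsurj : Function.Surjective ψ := by
    rintro ⟨c, hc⟩
    rw [mem_code_iff hm3 hmo hα f hf] at hc
    obtain ⟨hcdeg, d, hd⟩ := hc
    have hdmem : d ∈ Polynomial.degreeLT F n := by
      rw [Polynomial.mem_degreeLT]
      rcases eq_or_ne d 0 with rfl | hdne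
      · rw [Polynomial.degree_zero]
        exact WithBot.bot_lt_coe _
      · have hcne : c ≠ 0 := by rw [hd]; exact mul_ne_zero hgne hdne
        have hc2 : c.natDegree < 2 ^ m - 1 :=
          (Polynomial.natDegree_lt_iff_degree_lt hcne).mpr hcdeg
        rw [hd, Polynomial.natDegree_mul hgne hdne, hgdeg] at hc2
        rw [Polynomial.degree_eq_natDegree hdne]
        exact_mod_cast (by omega : d.natDegree < n)
    exact ⟨⟨d, hdmem⟩, Subtype.ext hd.symm⟩
  have hfr := LinearEquiv.finrank_eq (LinearEquiv.ofBijective ψ ⟨hinj, hsurj⟩)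
  rw [← hfr, (Polynomial.degreeLTEquiv F n).finrank_eq, Module.finrank_fin_fun]

lemma wt_low : ∀ w ∈ wtSet (codeC m α f), 4 ≤ w := by
  rintro w ⟨c, hc, hcne, hw⟩
  have hm : m ≠ 0 := by omega
  rw [mem_code_iff hm3 hmo hα f hf] at hc
  obtain ⟨hcdeg, hcdvd⟩ := hc
  have h1dvd : (X - 1 : F[X]) ∣ c := (Dvd.intro _ rfl).trans hcdvd
  have hmdvd : minpoly F (α⁻¹ : GaloisField 2 m) ∣ c :=
    (Dvd.intro_left _ rfl).trans hcdvd
  have haev1 : aeval (1 : GaloisField 2 m) c = 0 := by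
    obtain ⟨d, hd⟩ := h1dvd
    rw [hd, map_mul, map_sub, aeval_X, map_one, sub_self, zero_mul]
  have haevinv : aeval (α⁻¹ : GaloisField 2 m) c = 0 := by
    obtain ⟨d, hd⟩ := hmdvd
    rw [hd, map_mul, minpoly.aeval, zero_mul]
  have hweven : 2 ∣ w := by
    have h2 : aeval (1 : GaloisField 2 m) c = (w : GaloisField 2 m) := by
      rw [aeval_sum_support]
      simp only [one_pow, Finset.sum_const, nsmul_eq_mul, mul_one, hw]
    rw [haev1] at h2
    exact (CharP.cast_eq_zero_iff (GaloisField 2 m) 2 w).mp h2.symm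
  have hwne0 : w ≠ 0 := by
    intro h
    rw [h, Finset.card_eq_zero, Polynomial.support_eq_empty] at hw
    exact hcne hw
  have hwne2 : w ≠ 2 := by
    intro h
    rw [h] at hw
    obtain ⟨a, b, hab, hsupp⟩ := Finset.card_eq_two.mp hw
    have hsum : (α⁻¹ : GaloisField 2 m) ^ a + (α⁻¹ : GaloisField 2 m) ^ b = 0 := by
      have h4 := aeval_sum_support c (α⁻¹ : GaloisField 2 m)
      rw [haevinv, hsupp, Finset.sum_pair hab] at h4
      exact h4.symm
    have heq : (α⁻¹ : GaloisField 2 m) ^ a = (α⁻¹ : GaloisField 2 m) ^ b := by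
      have h3 := eq_neg_of_add_eq_zero_left hsum
      rwa [CharTwo.neg_eq] at h3
    have hbound : ∀ i ∈ c.support, i < 2 ^ m - 1 := by
      intro i hi
      have hb1 : i ≤ c.natDegree := Polynomial.le_natDegree_of_mem_supp i hi
      have hb2 : c.natDegree < 2 ^ m - 1 :=
        (Polynomial.natDegree_lt_iff_degree_lt hcne).mpr hcdeg
      omega
    have ha : a < 2 ^ m - 1 := hbound a (by rw [hsupp]; simp)
    have hb : b < 2 ^ m - 1 := hbound b (by rw [hsupp]; simp)
    exact hab (pow_inj hm (orderOf_inv_GF hm hα) ha hb heq)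
  omega

lemma wt_mem : 4 ∈ wtSet (codeC m α f) := by
  classical
  have hm : m ≠ 0 := by omega
  have hα0 := alpha_ne_zero hm hα
  have hv := v7 hm3
  have hαinv := orderOf_inv_GF hm hα
  have hne1 : α ≠ 1 := by
    intro h; rw [h, orderOf_one] at hα; omega
  have hpowne : ∀ j, j ≠ 0 → j < 2 ^ m - 1 → α ^ j ≠ 1 := by
    intro j hj0 hjv h
    have h1 := hα ▸ orderOf_dvd_of_pow_eq_one h
    have h2 := Nat.le_of_dvd (by omega) h1
    omega
  have h2ne : α ^ 2 ≠ 1 := hpowne 2 (by omega) (by omega)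
  have h3ne : α ^ 3 ≠ 1 := hpowne 3 (by omega) (by omega)
  set x4 : GaloisField 2 m := 1 + α + α ^ 2 with hx4
  have hd01 : (1 : GaloisField 2 m) ≠ α := fun h => hne1 h.symm
  have hd02 : (1 : GaloisField 2 m) ≠ α ^ 2 := fun h => h2ne h.symm
  have hd12 : α ≠ α ^ 2 := by
    intro h
    have h1 : α * 1 = α * α := by rw [mul_one]; exact h.trans (sq α)
    exact hne1 (mul_left_cancel₀ hα0 h1).symm
  have hx4ne0 : x4 ≠ 0 := by
    intro h
    have hkey : 1 + α ^ 3 = (1 + α) * x4 := by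
      rw [hx4]; linear_combination (-(α : GaloisField 2 m) - α ^ 2) * two_cast_zero
    rw [h, mul_zero] at hkey
    have h2 := eq_neg_of_add_eq_zero_right hkey
    rw [CharTwo.neg_eq] at h2
    exact h3ne h2
  have hx4ne1 : x4 ≠ 1 := by
    intro h
    have h1 : α * (1 + α) = 0 := by rw [hx4] at h; linear_combination h
    rcases mul_eq_zero.mp h1 with h2 | h2
    · exact hα0 h2
    · have h3 := eq_neg_of_add_eq_zero_right h2
      rw [CharTwo.neg_eq] at h3
      exact hne1 h3
  have hx4nea : x4 ≠ α := by
    intro h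
    have h1 : (1 : GaloisField 2 m) + α ^ 2 = 0 := by rw [hx4] at h; linear_combination h
    have h2 := eq_neg_of_add_eq_zero_right h1
    rw [CharTwo.neg_eq] at h2
    exact h2ne h2
  have hx4nea2 : x4 ≠ α ^ 2 := by
    intro h
    have h1 : (1 : GaloisField 2 m) + α = 0 := by rw [hx4] at h; linear_combination h
    have h2 := eq_neg_of_add_eq_zero_right h1
    rw [CharTwo.neg_eq] at h2
    exact hne1 h2
  obtain ⟨k1, hk1v, hk1⟩ := exists_pow_eq hm hαinv (1 : GaloisField 2 m) one_ne_zero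
  obtain ⟨k2, hk2v, hk2⟩ := exists_pow_eq hm hαinv α hα0
  obtain ⟨k3, hk3v, hk3⟩ := exists_pow_eq hm hαinv (α ^ 2) (pow_ne_zero 2 hα0)
  obtain ⟨k4, hk4v, hk4⟩ := exists_pow_eq hm hαinv x4 hx4ne0
  have key : ∀ {i j : ℕ} {x y : GaloisField 2 m},
      (α⁻¹ : GaloisField 2 m) ^ i = x → (α⁻¹ : GaloisField 2 m) ^ j = y → i = j → x = y := by
    rintro i j x y rfl rfl rfl; rfl
  have hne12 : k1 ≠ k2 := fun h => hd01 (key hk1 hk2 h)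
  have hne13 : k1 ≠ k3 := fun h => hd02 (key hk1 hk3 h)
  have hne14 : k1 ≠ k4 := fun h => hx4ne1 (key hk4 hk1 h.symm)
  have hne23 : k2 ≠ k3 := fun h => hd12 (key hk2 hk3 h)
  have hne24 : k2 ≠ k4 := fun h => hx4nea (key hk4 hk2 h.symm)
  have hne34 : k3 ≠ k4 := fun h => hx4nea2 (key hk4 hk3 h.symm)
  set s : Finset ℕ := {k1, k2, k3, k4} with hs
  have hcard : s.card = 4 := by
    rw [hs, Finset.card_insert_of_notMem (by simp [hne12, hne13, hne14]),
      Finset.card_insert_of_notMem (by simp [hne23, hne24]),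
      Finset.card_insert_of_notMem (by simp [hne34]), Finset.card_singleton]
  set c : F[X] := ∑ i ∈ s, X ^ i with hc
  have hsupp : c.support = s := support_sum_X_pow s
  have haevc : aeval (α⁻¹ : GaloisField 2 m) c = 0 := by
    have h1 := aeval_sum_support c (α⁻¹ : GaloisField 2 m)
    rw [hsupp, hs, Finset.sum_insert (by simp [hne12, hne13, hne14]),
      Finset.sum_insert (by simp [hne23, hne24]),
      Finset.sum_insert (by simp [hne34]), Finset.sum_singleton,
      hk1, hk2, hk3, hk4, hx4] at h1
    rw [h1]
    linear_combination (1 + (α : GaloisField 2 m) + α ^ 2) * two_cast_zero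
  have hev1 : Polynomial.eval (1 : F) c = 0 := by
    rw [hc, Polynomial.eval_finset_sum]
    simp only [Polynomial.eval_pow, Polynomial.eval_X, one_pow, Finset.sum_const,
      nsmul_eq_mul, mul_one, hcard]
    decide
  have hgdvd : ((X - 1) * minpoly F (α⁻¹ : GaloisField 2 m)) ∣ c := by
    refine (coprime_X_sub_one_minpoly hm3 hα).mul_dvd ?_ ?_
    · rw [(by rw [C_1] : (X - 1 : F[X]) = X - C 1), dvd_iff_isRoot]
      exact hev1
    · exact minpoly.dvd F _ haevc
  have hcmem : c ∈ codeC m α f := by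
    rw [mem_code_iff hm3 hmo hα f hf]
    constructor
    · have hcc : c ∈ Polynomial.degreeLT F (2 ^ m - 1) := by
        rw [hc]
        refine Submodule.sum_mem _ fun i hi => ?_
        rw [Polynomial.mem_degreeLT, Polynomial.degree_X_pow]
        have hiv : i < 2 ^ m - 1 := by
          rw [hs] at hi
          simp only [Finset.mem_insert, Finset.mem_singleton] at hi
          rcases hi with rfl | rfl | rfl | rfl <;> omega
        exact_mod_cast hiv
      exact Polynomial.mem_degreeLT.mp hcc
    · exact hgdvd
  have hcne : c ≠ 0 := by
    intro h
    rw [h, Polynomial.support_zero] at hsupp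
    rw [← hsupp] at hcard
    simp at hcard
  exact ⟨c, hcmem, hcne, by rw [hsupp, hcard]⟩

end Dim

/-- Theorem 1: for f₁(x) = x + x^{2^{(m+1)/2}−1} + x^{2^m−2^{(m+1)/2}+1} over 𝔽_{2^m},
m ≥ 3 odd, the minimal polynomial of the sequence s_t = Tr(f₁(α^t+1)) is
(x−1)·m_{α^{−1}}(x) of degree m+1; the code C_s has length 2^m−1,
dimension 2^m−2−m, and minimum distance exactly 4. -/
theorem stmt1 (m : ℕ) (hm3 : 3 ≤ m) (hmo : Odd m)
    (α : GaloisField 2 m) (hα : orderOf α = 2 ^ m - 1)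
    (f : GaloisField 2 m → GaloisField 2 m)
    (hf : ∀ x, f x = x + x ^ (2 ^ ((m + 1) / 2) - 1) +
        x ^ (2 ^ m - 2 ^ ((m + 1) / 2) + 1)) :
    genPoly m α f = (X - 1) * minpoly (ZMod 2) α⁻¹ ∧
    (genPoly m α f).natDegree = m + 1 ∧
    Module.finrank (ZMod 2) ↥(codeC m α f) = 2 ^ m - 2 - m ∧
    IsLeast (wtSet (codeC m α f)) 4 := by
  
  have hgen := genPoly_eq hm3 hmo hα f hf
  refine ⟨hgen, ?_, code_finrank hm3 hmo hα f hf,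
    ⟨wt_mem hm3 hmo hα f hf, fun w hw => wt_low hm3 hmo hα f hf w hw⟩⟩
  rw [hgen]
  exact gfactor_natDegree hm3 hα
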